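/- Let c₁, c₂ ∈ ℂ and Q(w) = (w² + c₁)² + c₂. If for every critical point w of Q (i.e. every w with Q′(w) = 0) the orbit (Q^{∘n}(w)) is bounded, then the alternated filled Julia set K_{P_{c₁c₂}} is a connected subset of ℂ. -/

import Mathlib

/-- The alternated orbit of `z₀` with parameters `c₁, c₂`:
`z_{n+1} = zₙ² + c₁` if `n` is even, `z_{n+1} = zₙ² + c₂` if `n` is odd. -/
def altOrbit (c₁ c₂ z₀ : ℂ) : ℕ → ℂ
  | 0 => z₀
  | n + 1 => if Even n then (altOrbit c₁ c₂ z₀ n) ^ 2 + c₁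
             else (altOrbit c₁ c₂ z₀ n) ^ 2 + c₂

/-- The alternated filled Julia set `K_{P_{c₁ c₂}}`. -/
def altK (c₁ c₂ : ℂ) : Set ℂ :=
  {z₀ | Bornology.IsBounded (Set.range (altOrbit c₁ c₂ z₀))}

open Bornology Metric Set

/-- Helper: a symmetric separation of the preimage of `T` under `z ↦ z^2+c` leads to a
separation of `T`. -/
lemma no_sep (c : ℂ) (T : Set ℂ) (hT : IsPreconnected T)
    (hX : IsCompact {z : ℂ | z ^ 2 + c ∈ T})
    (A B : Set ℂ) (hA : IsClosed A) (hB : IsClosed B)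
    (hAB : A ∪ B = {z : ℂ | z ^ 2 + c ∈ T}) (hd : A ∩ B = ∅)
    (h0 : (0 : ℂ) ∈ A) (hBne : B.Nonempty) : False := by
  set X : Set ℂ := {z : ℂ | z ^ 2 + c ∈ T} with hXdef
  have hXsymm : ∀ z : ℂ, z ∈ X → -z ∈ X := by
    intro z hz
    simpa [X, neg_pow] using hz
  set A₁ : Set ℂ := A ∩ (Neg.neg ⁻¹' A) with hA₁
  set B₁ : Set ℂ := B ∪ (Neg.neg ⁻¹' B) with hB₁
  have hAX : A ⊆ X := hAB ▸ subset_union_left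
  have hBX : B ⊆ X := hAB ▸ subset_union_right
  have hA₁X : A₁ ⊆ X := fun z hz => hAX hz.1
  have hB₁X : B₁ ⊆ X := by
    rintro z (hz | hz)
    · exact hBX hz
    · have := hXsymm _ (hBX hz)
      simpa using this
  have hdisj : ∀ z : ℂ, z ∈ A → z ∈ B → False := by
    intro z h1 h2
    have : z ∈ A ∩ B := ⟨h1, h2⟩
    simp [hd] at this
  -- A₁ ∪ B₁ = X
  have hcover : A₁ ∪ B₁ = X := by
    apply subset_antisymm (union_subset hA₁X hB₁X)
    intro z hz
    have hz' : z ∈ A ∪ B := hAB ▸ hz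
    rcases hz' with hz' | hz'
    · have hnz : -z ∈ A ∪ B := hAB ▸ hXsymm z hz
      rcases hnz with hnz | hnz
      · exact Or.inl ⟨hz', hnz⟩
      · exact Or.inr (Or.inr hnz)
    · exact Or.inr (Or.inl hz')
  -- compactness
  have hA₁c : IsCompact A₁ := hX.of_isClosed_subset (hA.inter (hA.preimage continuous_neg)) hA₁X
  have hB₁c : IsCompact B₁ := hX.of_isClosed_subset (hB.union (hB.preimage continuous_neg)) hB₁X
  set g : ℂ → ℂ := fun z => z ^ 2 + c with hg
  have hgc : Continuous g := by fun_prop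
  -- images
  have himA : IsClosed (g '' A₁) := (hA₁c.image hgc).isClosed
  have himB : IsClosed (g '' B₁) := (hB₁c.image hgc).isClosed
  have hTsub : T ⊆ g '' A₁ ∪ g '' B₁ := by
    intro t ht
    obtain ⟨z, hz⟩ := IsAlgClosed.exists_pow_nat_eq (t - c) (n := 2) (by norm_num)
    have hzX : z ∈ X := by simp [X, hz, ht]
    have hgz : g z = t := by simp [g, hz]
    have : z ∈ A₁ ∪ B₁ := hcover ▸ hzX
    rcases this with h' | h'
    · exact Or.inl ⟨z, h', hgz⟩
    · exact Or.inr ⟨z, h', hgz⟩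
  have hne1 : (T ∩ g '' A₁).Nonempty := by
    refine ⟨g 0, ?_, ⟨0, ⟨h0, by simpa using h0⟩, rfl⟩⟩
    have : (0 : ℂ) ∈ X := hAX h0
    simpa [X, g] using this
  have hne2 : (T ∩ g '' B₁).Nonempty := by
    obtain ⟨b, hb⟩ := hBne
    refine ⟨g b, ?_, ⟨b, Or.inl hb, rfl⟩⟩
    have : b ∈ X := hBX hb
    simpa [X, g] using this
  obtain ⟨t, _, ⟨a, haA, hga⟩, ⟨b, hbB, hgb⟩⟩ :=
    isPreconnected_closed_iff.mp hT (g '' A₁) (g '' B₁) himA himB hTsub hne1 hne2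
  -- a^2 = b^2
  have hsq : b = a ∨ b = -a := by
    have : (b - a) * (b + a) = 0 := by
      have h' : a ^ 2 + c = b ^ 2 + c := by
        show g a = g b
        rw [hga, hgb]
      linear_combination -h'
    rcases mul_eq_zero.mp this with h' | h'
    · exact Or.inl (by linear_combination h')
    · exact Or.inr (by linear_combination h')
  have haA' : a ∈ A := haA.1
  have hnaA : -a ∈ A := haA.2
  rcases hsq with rfl | rfl
  · rcases hbB with h' | h'
    · exact hdisj _ haA' h'
    · exact hdisj _ hnaA h'
  · rcases hbB with h' | h'
    · exact hdisj _ hnaA h'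
    · exact hdisj _ haA' (by simpa using h')

/-- Key lemma: the preimage of a compact preconnected set containing the critical value `c`
under `z ↦ z^2 + c` is compact and preconnected. -/
lemma key (c : ℂ) (T : Set ℂ) (hTc : IsCompact T) (hT : IsPreconnected T) (hc : c ∈ T) :
    IsCompact {z : ℂ | z ^ 2 + c ∈ T} ∧ IsPreconnected {z : ℂ | z ^ 2 + c ∈ T} := by
  set X : Set ℂ := {z : ℂ | z ^ 2 + c ∈ T} with hXdef
  have hXcl : IsClosed X := by
    have : Continuous fun z : ℂ => z ^ 2 + c := by fun_prop
    exact hTc.isClosed.preimage this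
  obtain ⟨M, hM⟩ := hTc.isBounded.subset_closedBall 0
  have hXcomp : IsCompact X := by
    rw [Metric.isCompact_iff_isClosed_bounded]
    refine ⟨hXcl, (Metric.isBounded_closedBall (x := (0:ℂ)) (r := Real.sqrt (M + ‖c‖))).subset ?_⟩
    intro z hz
    have h1 : ‖z ^ 2 + c‖ ≤ M := by
      have := hM hz
      simpa [Complex.dist_eq] using this
    have h2 : ‖z‖ ^ 2 ≤ M + ‖c‖ := by
      have h4 : ‖z ^ 2‖ ≤ ‖z ^ 2 + c‖ + ‖c‖ := by
        have := norm_add_le (z ^ 2 + c) (-c)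
        simp only [add_neg_cancel_right, norm_neg] at this
        simpa using this
      rw [norm_pow] at h4
      linarith
    have h3 : ‖z‖ ≤ Real.sqrt (M + ‖c‖) := by
      have := Real.sqrt_le_sqrt h2
      rwa [Real.sqrt_sq (norm_nonneg z)] at this
      
    simpa [Complex.dist_eq] using h3
  refine ⟨hXcomp, ?_⟩
  by_contra hnc
  rw [isPreconnected_iff_subset_of_fully_disjoint_closed hXcl] at hnc
  push_neg at hnc
  obtain ⟨A, B, hA, hB, hsub, hdisj, hnAB⟩ := hnc
  obtain ⟨hnA, hnB⟩ := hnAB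
  set A' : Set ℂ := A ∩ X with hA'def
  set B' : Set ℂ := B ∩ X with hB'def
  have hA' : IsClosed A' := hA.inter hXcl
  have hB' : IsClosed B' := hB.inter hXcl
  have hunion : A' ∪ B' = X := by
    apply subset_antisymm (union_subset inter_subset_right inter_subset_right)
    intro z hz
    rcases hsub hz with h' | h'
    · exact Or.inl ⟨h', hz⟩
    · exact Or.inr ⟨h', hz⟩
  have hint : A' ∩ B' = ∅ := by
    rw [eq_empty_iff_forall_notMem]
    rintro z ⟨⟨h1, _⟩, ⟨h2, _⟩⟩
    exact (Set.disjoint_left.mp hdisj h1) h2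
  have hAne : A'.Nonempty := by
    obtain ⟨x, hx, hxB⟩ := not_subset.mp hnB
    rcases hsub hx with h' | h'
    · exact ⟨x, h', hx⟩
    · exact absurd h' hxB
  have hBne : B'.Nonempty := by
    obtain ⟨x, hx, hxA⟩ := not_subset.mp hnA
    rcases hsub hx with h' | h'
    · exact absurd h' hxA
    · exact ⟨x, h', hx⟩
  have h0X : (0 : ℂ) ∈ X := by simpa [X] using hc
  rcases (hunion ▸ h0X : (0:ℂ) ∈ A' ∪ B') with h0 | h0
  · exact no_sep c T hT hXcomp A' B' hA' hB' hunion hint h0 hBne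
  · exact no_sep c T hT hXcomp B' A' hB' hA' (by rw [union_comm]; exact hunion)
      (by rw [inter_comm]; exact hint) h0 hAne

/-- A decreasing intersection of compact preconnected sets is preconnected. -/
lemma nested_preconnected (K : ℕ → Set ℂ) (hcomp : ∀ n, IsCompact (K n))
    (hconn : ∀ n, IsPreconnected (K n)) (hdec : ∀ n, K (n + 1) ⊆ K n) :
    IsPreconnected (⋂ n, K n) := by
  have hanti : Antitone K := antitone_nat_of_succ_le hdec
  set L : Set ℂ := ⋂ n, K n with hL
  have hLcl : IsClosed L := isClosed_iInter fun n => (hcomp n).isClosed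
  by_contra hnc
  rw [isPreconnected_iff_subset_of_fully_disjoint_closed hLcl] at hnc
  push_neg at hnc
  obtain ⟨A, B, hA, hB, hsub, hdisj, hnA, hnB⟩ := hnc
  set A' : Set ℂ := A ∩ L with hA'def
  set B' : Set ℂ := B ∩ L with hB'def
  have hA' : IsClosed A' := hA.inter hLcl
  have hB' : IsClosed B' := hB.inter hLcl
  have hd' : Disjoint A' B' := hdisj.mono inter_subset_left inter_subset_left
  obtain ⟨U, V, hU, hV, hAU, hBV, hUV⟩ := normal_separation hA' hB' hd'
  have hAne : A'.Nonempty := by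
    obtain ⟨x, hx, hxB⟩ := not_subset.mp hnB
    rcases hsub hx with h' | h'
    · exact ⟨x, h', hx⟩
    · exact absurd h' hxB
  have hBne : B'.Nonempty := by
    obtain ⟨x, hx, hxA⟩ := not_subset.mp hnA
    rcases hsub hx with h' | h'
    · exact absurd h' hxA
    · exact ⟨x, h', hx⟩
  -- some K n is contained in U ∪ V
  have hexists : ∃ n, K n ⊆ U ∪ V := by
    by_contra hno
    push_neg at hno
    have hne : ∀ n, (K n ∩ (U ∪ V)ᶜ).Nonempty := by
      intro n
      obtain ⟨x, hx, hxUV⟩ := not_subset.mp (hno n)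
      exact ⟨x, hx, hxUV⟩
    have hdir : Directed (fun x1 x2 : Set ℂ => x1 ⊇ x2) fun n => K n ∩ (U ∪ V)ᶜ := by
      intro m n
      refine ⟨max m n, ?_, ?_⟩
      · exact inter_subset_inter_left _ (hanti (le_max_left m n))
      · exact inter_subset_inter_left _ (hanti (le_max_right m n))
    have hcl : ∀ n, IsClosed (K n ∩ (U ∪ V)ᶜ) := fun n =>
      (hcomp n).isClosed.inter (hU.union hV).isClosed_compl
    have hcp : ∀ n, IsCompact (K n ∩ (U ∪ V)ᶜ) := fun n =>
      (hcomp n).of_isClosed_subset (hcl n) inter_subset_left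
    have hne' := IsCompact.nonempty_iInter_of_directed_nonempty_isCompact_isClosed
      (fun n => K n ∩ (U ∪ V)ᶜ) hdir hne hcp hcl
    obtain ⟨x, hx⟩ := hne'
    simp only [mem_iInter, mem_inter_iff] at hx
    have hxL : x ∈ L := mem_iInter.mpr fun n => (hx n).1
    have hxUV : x ∉ U ∪ V := (hx 0).2
    rcases hsub hxL with h' | h'
    · exact hxUV (Or.inl (hAU ⟨h', hxL⟩))
    · exact hxUV (Or.inr (hBV ⟨h', hxL⟩))
  obtain ⟨n, hn⟩ := hexists
  have hKU : (K n ∩ U).Nonempty := by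
    obtain ⟨x, hxA, hxL⟩ := hAne
    exact ⟨x, mem_iInter.mp hxL n, hAU ⟨hxA, hxL⟩⟩
  have hKV : (K n ∩ V).Nonempty := by
    obtain ⟨x, hxB, hxL⟩ := hBne
    exact ⟨x, mem_iInter.mp hxL n, hBV ⟨hxB, hxL⟩⟩
  obtain ⟨x, _, hxU, hxV⟩ := hconn n U V hU hV hn hKU hKV
  exact (Set.disjoint_left.mp hUV hxU) hxV

/-- one escape step for `z ↦ z^2+c` -/
lemma step_escape (c : ℂ) (R : ℝ) (hR : 2 + ‖c‖ ≤ R) (w : ℂ)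
    (hw : R < ‖w‖) :
    2 * ‖w‖ ≤ ‖w ^ 2 + c‖ ∧ R < ‖w ^ 2 + c‖ := by
  have hb : (0:ℝ) ≤ ‖c‖ := norm_nonneg c
  have h1 : ‖w‖ ^ 2 - ‖c‖ ≤ ‖w ^ 2 + c‖ := by
    have h2 := norm_add_le (w ^ 2 + c) (-c)
    simp only [add_neg_cancel_right, norm_neg] at h2
    rw [norm_pow] at h2
    linarith
  constructor
  · nlinarith
  · nlinarith

/-- the even-index subsequence of the alternated orbit is the orbit of the quartic -/
lemma alt_eq (c₁ c₂ z : ℂ) (n : ℕ) :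
    altOrbit c₁ c₂ z (2 * n) = (fun w : ℂ => (w ^ 2 + c₁) ^ 2 + c₂)^[n] z ∧
    altOrbit c₁ c₂ z (2 * n + 1) = ((fun w : ℂ => (w ^ 2 + c₁) ^ 2 + c₂)^[n] z) ^ 2 + c₁ := by
  set Q : ℂ → ℂ := fun w => (w ^ 2 + c₁) ^ 2 + c₂ with hQ
  induction n with
  | zero =>
    constructor
    · rfl
    · show altOrbit c₁ c₂ z (0 + 1) = _
      simp [altOrbit]
  | succ n ih =>
    obtain ⟨ih1, ih2⟩ := ih
    have h1 : altOrbit c₁ c₂ z (2 * (n + 1)) = Q^[n + 1] z := by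
      have : 2 * (n + 1) = (2 * n + 1) + 1 := by ring
      rw [this]
      show (if Even (2 * n + 1) then _ else _) = _
      rw [if_neg (by simp [Nat.even_add_one, parity_simps]), ih2,
        Function.iterate_succ_apply']
    refine ⟨h1, ?_⟩
    show (if Even (2 * (n + 1)) then altOrbit c₁ c₂ z (2 * (n + 1)) ^ 2 + c₁ else _) = _
    rw [if_pos (by simp [parity_simps]), h1]

theorem stmt_14 (c₁ c₂ : ℂ)
    (h : ∀ w : ℂ, deriv (fun w : ℂ => (w ^ 2 + c₁) ^ 2 + c₂) w = 0 →
      Bornology.IsBounded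
        (Set.range fun n : ℕ => (fun w : ℂ => (w ^ 2 + c₁) ^ 2 + c₂)^[n] w)) :
    IsConnected (altK c₁ c₂) := by
  set Q : ℂ → ℂ := fun w => (w ^ 2 + c₁) ^ 2 + c₂ with hQ
  -- derivative formula
  have hderiv : ∀ w : ℂ, deriv (fun w : ℂ => (w ^ 2 + c₁) ^ 2 + c₂) w
      = 2 * (w ^ 2 + c₁) * (2 * w) := by
    intro w
    have h1 : HasDerivAt (fun w : ℂ => w ^ 2 + c₁) (2 * w) w := by
      simpa using (hasDerivAt_pow 2 w).add_const c₁
    have h2 := (h1.pow 2).add_const c₂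
    have h3 := h2.deriv
    rw [show (fun w : ℂ => (w ^ 2 + c₁) ^ 2 + c₂) = (fun x => ((fun w : ℂ => w ^ 2 + c₁) ^ 2) x + c₂) from rfl, h3]
    norm_num
  -- critical points : 0 and w₀ with w₀^2 = -c₁
  obtain ⟨w₀, hw₀⟩ := IsAlgClosed.exists_pow_nat_eq (-c₁) (n := 2) (by norm_num)
  have hcrit0 : deriv (fun w : ℂ => (w ^ 2 + c₁) ^ 2 + c₂) 0 = 0 := by
    rw [hderiv]; ring
  have hcritw : deriv (fun w : ℂ => (w ^ 2 + c₁) ^ 2 + c₂) w₀ = 0 := by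
    rw [hderiv, hw₀]; ring
  obtain ⟨r₀, hr₀⟩ := (h 0 hcrit0).subset_closedBall 0
  obtain ⟨rw', hrw⟩ := (h w₀ hcritw).subset_closedBall 0
  set R : ℝ := max (2 + ‖c₁‖ + ‖c₂‖) (max r₀ rw') with hRdef
  have hR1 : 2 + ‖c₁‖ + ‖c₂‖ ≤ R := le_max_left _ _
  have hRc₁ : 2 + ‖c₁‖ ≤ R := by
    have := norm_nonneg c₂; linarith
  have hRc₂ : 2 + ‖c₂‖ ≤ R := by
    have := norm_nonneg c₁; linarith
  have hRpos : (0:ℝ) < R := by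
    have h1 := norm_nonneg c₁; have h2 := norm_nonneg c₂; linarith
  -- escape lemma for Q
  have hesc : ∀ w : ℂ, R < ‖w‖ →
      2 * ‖w‖ ≤ ‖Q w‖ ∧ R < ‖Q w‖ := by
    intro w hw
    obtain ⟨ha, hb⟩ := step_escape c₁ R hRc₁ w hw
    obtain ⟨hc, hd⟩ := step_escape c₂ R hRc₂ (w ^ 2 + c₁) hb
    refine ⟨?_, hd⟩
    calc 2 * ‖w‖ ≤ 2 * (2 * ‖w‖) := by
          have : 0 ≤ ‖w‖ := norm_nonneg w; linarith
      _ ≤ 2 * ‖w ^ 2 + c₁‖ := by linarith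
      _ ≤ ‖(w ^ 2 + c₁) ^ 2 + c₂‖ := hc
      _ = ‖Q w‖ := rfl
  -- orbits of the two critical values stay within R
  have hQw₀ : Q w₀ = c₂ := by simp [Q, hw₀]
  have hc₂mem : ∀ n : ℕ, ‖Q^[n] c₂‖ ≤ R := by
    intro n
    have : Q^[n] c₂ = Q^[n + 1] w₀ := by
      rw [Function.iterate_succ_apply, hQw₀]
    rw [this]
    have hmem := hrw (mem_range_self (n + 1))
    have : dist (Q^[n+1] w₀) 0 ≤ rw' := hmem
    rw [Complex.dist_eq, sub_zero] at this
    calc ‖Q^[n+1] w₀‖ ≤ rw' := this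
      _ ≤ R := le_trans (le_max_right _ _) (le_max_right _ _)
  have hQ0mem : ∀ n : ℕ, ‖Q^[n] (Q 0)‖ ≤ R := by
    intro n
    have : Q^[n] (Q 0) = Q^[n + 1] 0 := (Function.iterate_succ_apply Q n 0).symm
    rw [this]
    have hmem := hr₀ (mem_range_self (n + 1))
    have h' : dist (Q^[n+1] (0:ℂ)) 0 ≤ r₀ := hmem
    rw [Complex.dist_eq, sub_zero] at h'
    calc ‖Q^[n+1] (0:ℂ)‖ ≤ r₀ := h'
      _ ≤ R := le_trans (le_max_left _ _) (le_max_right _ _)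
  -- the sublevel sets
  set S : ℕ → Set ℂ := fun n => {z : ℂ | ‖Q^[n] z‖ ≤ R} with hSdef
  have hc₂S : ∀ n, c₂ ∈ S n := fun n => hc₂mem n
  have hQ0S : ∀ n, (c₁ ^ 2 + c₂) ∈ S n := by
    intro n
    have : Q 0 = c₁ ^ 2 + c₂ := by simp [Q]
    simpa [S, this] using hQ0mem n
  -- S is decreasing
  have hSdec : ∀ n, S (n + 1) ⊆ S n := by
    intro n z hz
    by_contra hz'
    have h1 : R < ‖Q^[n] z‖ := lt_of_not_ge hz'
    have h2 := (hesc _ h1).2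
    rw [← Function.iterate_succ_apply' Q n z] at h2
    exact absurd hz (not_le.mpr h2)
  -- S n is compact and preconnected, by induction using `key`
  have hScp : ∀ n, IsCompact (S n) ∧ IsPreconnected (S n) := by
    intro n
    induction n with
    | zero =>
      have hS0 : S 0 = closedBall (0:ℂ) R := by
        ext z
        simp [S, Complex.dist_eq]
      rw [hS0]
      exact ⟨isCompact_closedBall _ _, (convex_closedBall _ _).isPreconnected⟩
    | succ n ih =>
      obtain ⟨ihc, ihp⟩ := ih
      obtain ⟨h1c, h1p⟩ := key c₂ (S n) ihc ihp (hc₂S n)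
      have hc₁mem : c₁ ∈ {w : ℂ | w ^ 2 + c₂ ∈ S n} := hQ0S n
      obtain ⟨h2c, h2p⟩ := key c₁ {w : ℂ | w ^ 2 + c₂ ∈ S n} h1c h1p hc₁mem
      have : S (n + 1) = {z : ℂ | z ^ 2 + c₁ ∈ {w : ℂ | w ^ 2 + c₂ ∈ S n}} := by
        ext z
        show ‖Q^[n+1] z‖ ≤ R ↔ ‖Q^[n] ((z ^ 2 + c₁) ^ 2 + c₂)‖ ≤ R
        rw [Function.iterate_succ_apply]
      rw [this]
      exact ⟨h2c, h2p⟩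
  -- altK = ⋂ S n
  have hKeq : altK c₁ c₂ = ⋂ n, S n := by
    ext z
    simp only [altK, mem_setOf_eq, mem_iInter]
    constructor
    · intro hb
      obtain ⟨C, hC⟩ := hb.subset_closedBall 0
      have hCbound : ∀ n : ℕ, ‖Q^[n] z‖ ≤ C := by
        intro n
        have := hC (mem_range_self (2 * n))
        rw [Metric.mem_closedBall, Complex.dist_eq, sub_zero, (alt_eq c₁ c₂ z n).1] at this
        exact this
      intro n
      by_contra hn
      have h1 : R < ‖Q^[n] z‖ := lt_of_not_ge hn
      -- iterated escape
      have hiter : ∀ k : ℕ, R < ‖Q^[n + k] z‖ ∧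
          2 ^ k * ‖Q^[n] z‖ ≤ ‖Q^[n + k] z‖ := by
        intro k
        induction k with
        | zero => exact ⟨by simpa using h1, by simp⟩
        | succ k ih =>
          obtain ⟨ih1, ih2⟩ := ih
          obtain ⟨he1, he2⟩ := hesc _ ih1
          have heq : Q^[n + (k + 1)] z = Q (Q^[n + k] z) := by
            rw [show n + (k + 1) = (n + k) + 1 by ring, Function.iterate_succ_apply']
          constructor
          · rw [heq]; exact he2
          · rw [heq]
            calc 2 ^ (k+1) * ‖Q^[n] z‖
                = 2 * (2 ^ k * ‖Q^[n] z‖) := by ring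
              _ ≤ 2 * ‖Q^[n + k] z‖ := by linarith
              _ ≤ ‖Q (Q^[n+k] z)‖ := he1
      obtain ⟨k, hk⟩ := pow_unbounded_of_one_lt (C / R) (by norm_num : (1:ℝ) < 2)
      have hCk : C < 2 ^ k * R := by
        rw [div_lt_iff₀ hRpos] at hk
        linarith
      have h2 := (hiter k).2
      have h3 := hCbound (n + k)
      have h4 : 2 ^ k * R < 2 ^ k * ‖Q^[n] z‖ := by
        have : (0:ℝ) < 2 ^ k := by positivity
        nlinarith
      linarith
    · intro hz
      have hbd : ∀ m : ℕ, ‖altOrbit c₁ c₂ z m‖ ≤ R ^ 2 + ‖c₁‖ + R := by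
        intro m
        have hR2 : (0:ℝ) ≤ R ^ 2 := sq_nonneg R
        have hac : (0:ℝ) ≤ ‖c₁‖ := norm_nonneg c₁
        rcases Nat.even_or_odd m with ⟨n, hn⟩ | ⟨n, hn⟩
        · rw [hn, ← two_mul, (alt_eq c₁ c₂ z n).1, ← hQ]
          have h1 := hz n
          simp only [S, mem_setOf_eq] at h1
          linarith
        · rw [hn, (alt_eq c₁ c₂ z n).2, ← hQ]
          have h1 := hz n
          simp only [S, mem_setOf_eq] at h1
          have h2 : ‖(Q^[n] z) ^ 2 + c₁‖
              ≤ ‖Q^[n] z‖ ^ 2 + ‖c₁‖ := by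
            calc ‖(Q^[n] z) ^ 2 + c₁‖
                ≤ ‖(Q^[n] z) ^ 2‖ + ‖c₁‖ := norm_add_le _ _
              _ = ‖Q^[n] z‖ ^ 2 + ‖c₁‖ := by rw [norm_pow]
          have h3 : ‖Q^[n] z‖ ^ 2 ≤ R ^ 2 := by nlinarith [norm_nonneg (Q^[n] z)]
          linarith
      refine (Metric.isBounded_closedBall (x := (0:ℂ)) (r := R ^ 2 + ‖c₁‖ + R)).subset ?_
      rintro x ⟨m, rfl⟩
      rw [Metric.mem_closedBall, Complex.dist_eq, sub_zero]
      exact hbd m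
  rw [hKeq]
  refine ⟨⟨c₂, mem_iInter.mpr hc₂S⟩, ?_⟩
  exact nested_preconnected S (fun n => (hScp n).1) (fun n => (hScp n).2) hSdec
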